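/- Quality of the spectral estimator: Under the generative model, let Φ ∈ ℝ^{nd×d} satisfy ΦᵀΦ = n I_d and maximize tr(ΦᵀCΦ) over all matrices with this constraint (equivalently, the columns of Φ are scaled top-d eigenvectors of C), and let G⁰ ∈ O(d)^{⊗n} be a blockwise nearest point of Φ in O(d)^{⊗n} (each G⁰_i minimizes ‖X − Φ_i‖_F over X ∈ O(d)). Then d(G⁰, G*) ≤ 8√d (‖W − μ·1_n1_nᵀ‖ + ‖A ∘ Δ‖)/(√n · μ). -/

import Mathlib

open Matrix BigOperators

noncomputable section
namespace GroupSync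

variable {n d : ℕ}

section PSDSqrt
open scoped ComplexOrder

/-- The positive semidefinite square root of a positive semidefinite matrix
(the former `Matrix.PosSemidef.sqrt`, removed from Mathlib). -/
def PosSemidef.sqrt {𝕜 : Type*} [RCLike 𝕜] {m : Type*} [Fintype m] [DecidableEq m]
    {M : Matrix m m 𝕜} (hA : M.PosSemidef) : Matrix m m 𝕜 :=
  hA.1.eigenvectorUnitary.1 * diagonal ((↑) ∘ (Real.sqrt ∘ hA.1.eigenvalues)) *
    (star hA.1.eigenvectorUnitary : Matrix m m 𝕜)

end PSDSqrt

/-- Frobenius norm of a real matrix. -/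
def frob {m k : Type*} [Fintype m] [Fintype k] (X : Matrix m k ℝ) : ℝ :=
  Real.sqrt (∑ i, ∑ j, (X i j) ^ 2)

/-- Spectral (operator) norm of a real matrix: the operator norm of the induced
linear map between Euclidean spaces. -/
def spec {m k : Type*} [Fintype m] [Fintype k] [DecidableEq k] (X : Matrix m k ℝ) : ℝ :=
  ‖LinearMap.toContinuousLinearMap (Matrix.toEuclideanLin X)‖

/-- Nuclear norm: trace of the positive semidefinite square root of `X * Xᵀ`
(i.e. the sum of the singular values of `X`). -/
def nuclear {m k : Type*} [Fintype m] [Fintype k] [DecidableEq m] (X : Matrix m k ℝ) : ℝ :=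
  (PosSemidef.sqrt (Matrix.posSemidef_self_mul_conjTranspose X)).trace

/-- The positive semidefinite square root of `X * Xᵀ`. -/
def psdSqrtMulT {m k : Type*} [Fintype m] [Fintype k] [DecidableEq m] (X : Matrix m k ℝ) :
    Matrix m m ℝ :=
  PosSemidef.sqrt (Matrix.posSemidef_self_mul_conjTranspose X)

/-- Membership in the orthogonal group `O(d)`. -/
def IsOd (g : Matrix (Fin d) (Fin d) ℝ) : Prop :=
  gᵀ * g = 1 ∧ g * gᵀ = 1

/-- Membership in the special orthogonal group `SO(d)`. -/
def IsSOd (g : Matrix (Fin d) (Fin d) ℝ) : Prop :=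
  IsOd g ∧ g.det = 1

/-- The `i`-th `d × d` block of an `nd × d` matrix. -/
def blk (X : Matrix (Fin n × Fin d) (Fin d) ℝ) (i : Fin n) : Matrix (Fin d) (Fin d) ℝ :=
  Matrix.of fun a b => X (i, a) b

/-- Membership in `O(d)^{⊗n}`: every `d × d` block is orthogonal. -/
def OdN (G : Matrix (Fin n × Fin d) (Fin d) ℝ) : Prop :=
  ∀ i : Fin n, IsOd (blk G i)

/-- Membership in `SO(d)^{⊗n}`. -/
def SOdN (G : Matrix (Fin n × Fin d) (Fin d) ℝ) : Prop :=
  ∀ i : Fin n, IsSOd (blk G i)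

/-- The `i`-th block column (an `nd × d` matrix) of an `nd × nd` matrix. -/
def bcol (M : Matrix (Fin n × Fin d) (Fin n × Fin d) ℝ) (i : Fin n) :
    Matrix (Fin n × Fin d) (Fin d) ℝ :=
  Matrix.of fun p b => M p (i, b)

/-- The `ij`-th `d × d` block of an `nd × nd` matrix. -/
def dblk (M : Matrix (Fin n × Fin d) (Fin n × Fin d) ℝ) (i j : Fin n) :
    Matrix (Fin d) (Fin d) ℝ :=
  Matrix.of fun a b => M (i, a) (j, b)

/-- `G' ∈ T_α(G)` (where `Ct = C + α I`): `G' ∈ O(d)^{⊗n}` and each block `G'_i` is a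
nearest point of `C̃ᵢᵀ G` in `O(d)` w.r.t. the Frobenius norm. -/
def InT (Ct : Matrix (Fin n × Fin d) (Fin n × Fin d) ℝ)
    (G G' : Matrix (Fin n × Fin d) (Fin d) ℝ) : Prop :=
  OdN G' ∧ ∀ i : Fin n, ∀ X : Matrix (Fin d) (Fin d) ℝ, IsOd X →
    frob (blk G' i - (bcol Ct i)ᵀ * G) ≤ frob (X - (bcol Ct i)ᵀ * G)

/-- `G' ∈ ST_α(G)`: the `SO(d)` analogue of `InT`. -/
def InST (Ct : Matrix (Fin n × Fin d) (Fin n × Fin d) ℝ)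
    (G G' : Matrix (Fin n × Fin d) (Fin d) ℝ) : Prop :=
  SOdN G' ∧ ∀ i : Fin n, ∀ X : Matrix (Fin d) (Fin d) ℝ, IsSOd X →
    frob (blk G' i - (bcol Ct i)ᵀ * G) ≤ frob (X - (bcol Ct i)ᵀ * G)

/-- The quotient distance `d(X, Y) = min_{g ∈ O(d)} ‖X − Y g‖_F`. -/
def dOrth (X Y : Matrix (Fin n × Fin d) (Fin d) ℝ) : ℝ :=
  ⨅ g : {g : Matrix (Fin d) (Fin d) ℝ // IsOd g}, frob (X - Y * g.1)

/-- The objective function `f(G) = tr(Gᵀ C G)`. -/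
def obj (C : Matrix (Fin n × Fin d) (Fin n × Fin d) ℝ)
    (G : Matrix (Fin n × Fin d) (Fin d) ℝ) : ℝ :=
  Matrix.trace (Gᵀ * C * G)

/-- Hadamard (entrywise) product. -/
def had {m k : Type*} (X Y : Matrix m k ℝ) : Matrix m k ℝ :=
  Matrix.of fun p q => X p q * Y p q

/-- `W ⊗ (1_d 1_dᵀ)`, the Kronecker product of `W` with the all-ones `d × d` matrix. -/
def kron1 (W : Matrix (Fin n) (Fin n) ℝ) : Matrix (Fin n × Fin d) (Fin n × Fin d) ℝ :=
  Matrix.kroneckerMap (· * ·) W (Matrix.of fun (_ _ : Fin d) => (1 : ℝ))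

/-- The all-ones matrix `1_m 1_mᵀ`. -/
def onesMat (m : Type*) : Matrix m m ℝ :=
  Matrix.of fun _ _ => (1 : ℝ)

/-- `symblockdiag`: symmetrize the diagonal `d × d` blocks, zero out all other blocks. -/
def sbd (X : Matrix (Fin n × Fin d) (Fin n × Fin d) ℝ) :
    Matrix (Fin n × Fin d) (Fin n × Fin d) ℝ :=
  Matrix.of fun p q => if p.1 = q.1 then (X p q + X (p.1, q.2) (q.1, p.2)) / 2 else 0

/-- `S(G) = symblockdiag(C G Gᵀ) − C`. -/
def Smat (C : Matrix (Fin n × Fin d) (Fin n × Fin d) ℝ)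
    (G : Matrix (Fin n × Fin d) (Fin d) ℝ) : Matrix (Fin n × Fin d) (Fin n × Fin d) ℝ :=
  sbd (C * (G * Gᵀ)) - C

/-- `G` is a second-order critical point of (QP): `S(G) G = 0` and
`⟨H, S(G) H⟩ ≥ 0` for all tangent directions `H` (blockwise `Hᵢ Gᵢᵀ` skew-symmetric). -/
def IsSOC (C : Matrix (Fin n × Fin d) (Fin n × Fin d) ℝ)
    (G : Matrix (Fin n × Fin d) (Fin d) ℝ) : Prop :=
  Smat C G * G = 0 ∧
  ∀ H : Matrix (Fin n × Fin d) (Fin d) ℝ,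
    (∀ i : Fin n, (blk H i * (blk G i)ᵀ)ᵀ = -(blk H i * (blk G i)ᵀ)) →
    0 ≤ Matrix.trace (Hᵀ * (Smat C G * H))

/-- Smallest singular value of a square matrix, as the minimum of `‖M v‖` over
unit vectors `v`. -/
def sigmaMin (M : Matrix (Fin d) (Fin d) ℝ) : ℝ :=
  ⨅ v : {v : Fin d → ℝ // ∑ a, (v a) ^ 2 = 1}, Real.sqrt (∑ a, (M.mulVec v.1 a) ^ 2)

/-- The singular values of a square matrix: square roots of the eigenvalues of `Mᵀ M`. -/
def singVal (M : Matrix (Fin d) (Fin d) ℝ) (l : Fin d) : ℝ :=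
  Real.sqrt ((Matrix.isHermitian_iff_isSymm.mpr (Matrix.isSymm_transpose_mul_self M)).eigenvalues l)

/-- Smallest eigenvalue of a (symmetric) matrix, as the minimum Rayleigh quotient
over unit vectors. -/
def lambdaMin {m : Type*} [Fintype m] (M : Matrix m m ℝ) : ℝ :=
  ⨅ v : {v : m → ℝ // ∑ i, (v i) ^ 2 = 1}, v.1 ⬝ᵥ M.mulVec v.1

/-- `D_α(G)`: block diagonal of the psd square roots of `(C̃ᵢᵀ G)(C̃ᵢᵀ G)ᵀ`, minus `C̃`. -/
def Dmat (Ct : Matrix (Fin n × Fin d) (Fin n × Fin d) ℝ)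
    (G : Matrix (Fin n × Fin d) (Fin d) ℝ) : Matrix (Fin n × Fin d) (Fin n × Fin d) ℝ :=
  (Matrix.of fun p q =>
    if p.1 = q.1 then psdSqrtMulT ((bcol Ct p.1)ᵀ * G) p.2 q.2 else 0) - Ct

/-- The residual function `ρ_α(G) = ‖D_α(G) G‖_F`. -/
def rho (Ct : Matrix (Fin n × Fin d) (Fin n × Fin d) ℝ)
    (G : Matrix (Fin n × Fin d) (Fin d) ℝ) : ℝ :=
  frob (Dmat Ct G * G)

/-- Blockwise infinity norm: `‖X‖_∞ = max_i ‖X_i‖` (spectral norm of the blocks). -/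
def binf (X : Matrix (Fin n × Fin d) (Fin d) ℝ) : ℝ :=
  ⨆ i : Fin n, spec (blk X i)


set_option linter.unusedSectionVars false
set_option linter.unnecessarySimpa false
set_option maxHeartbeats 1000000

section AuxToolkit

variable {m k l : Type*} [Fintype m] [Fintype k] [Fintype l]

/-- embedding of matrices into Euclidean space -/
def emb (X : Matrix m k ℝ) : EuclideanSpace ℝ (m × k) :=
  (WithLp.equiv 2 _).symm (fun p => X p.1 p.2)

lemma emb_sub (X Y : Matrix m k ℝ) : emb (X - Y) = emb X - emb Y := rfl

lemma emb_add (X Y : Matrix m k ℝ) : emb (X + Y) = emb X + emb Y := rfl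

lemma frob_eq_norm (X : Matrix m k ℝ) : frob X = ‖emb X‖ := by
  rw [EuclideanSpace.norm_eq, frob]
  congr 1
  rw [Fintype.sum_prod_type]
  refine Finset.sum_congr rfl fun i _ => Finset.sum_congr rfl fun j _ => ?_
  simp [emb, sq_abs]

lemma frob_nonneg (X : Matrix m k ℝ) : 0 ≤ frob X := Real.sqrt_nonneg _

lemma frob_sq (X : Matrix m k ℝ) : frob X ^ 2 = ∑ i, ∑ j, (X i j) ^ 2 :=
  Real.sq_sqrt (Finset.sum_nonneg fun _ _ => Finset.sum_nonneg fun _ _ => sq_nonneg _)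

lemma frob_triangle (X Y : Matrix m k ℝ) : frob (X + Y) ≤ frob X + frob Y := by
  rw [frob_eq_norm, frob_eq_norm, frob_eq_norm, emb_add]; exact norm_add_le _ _

lemma frob_neg (X Y : Matrix m k ℝ) : frob (X - Y) = frob (Y - X) := by
  rw [frob_eq_norm, frob_eq_norm, emb_sub, emb_sub, ← norm_neg, neg_sub]

lemma inner_emb (X Y : Matrix m k ℝ) :
    inner ℝ (emb X) (emb Y) = ∑ i, ∑ j, X i j * Y i j := by
  rw [PiLp.inner_apply, Fintype.sum_prod_type]
  refine Finset.sum_congr rfl fun i _ => Finset.sum_congr rfl fun j _ => ?_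
  simp [emb, mul_comm]

lemma ip_le (X Y : Matrix m k ℝ) :
    (∑ i, ∑ j, X i j * Y i j) ≤ frob X * frob Y := by
  rw [← inner_emb, frob_eq_norm, frob_eq_norm]
  exact real_inner_le_norm _ _

lemma trace_transpose_mul' (X Y : Matrix m k ℝ) :
    Matrix.trace (Xᵀ * Y) = ∑ i, ∑ j, X i j * Y i j := by
  rw [Matrix.trace]
  simp only [Matrix.diag_apply, Matrix.mul_apply, Matrix.transpose_apply]
  exact Finset.sum_comm

/-- squared-norm of a vector -/
def nsq (v : m → ℝ) : ℝ := ∑ i, v i ^ 2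

lemma nsq_nonneg (v : m → ℝ) : 0 ≤ nsq v := Finset.sum_nonneg fun _ _ => sq_nonneg _

lemma norm_symm_eq (v : m → ℝ) :
    ‖(WithLp.equiv 2 (m → ℝ)).symm v‖ = Real.sqrt (nsq v) := by
  rw [EuclideanSpace.norm_eq]
  congr 1
  exact Finset.sum_congr rfl fun i _ => by simp [sq_abs]

lemma dot_CS (v w : m → ℝ) : v ⬝ᵥ w ≤ Real.sqrt (nsq v) * Real.sqrt (nsq w) := by
  have h : inner ℝ ((WithLp.equiv 2 (m → ℝ)).symm v) ((WithLp.equiv 2 (m → ℝ)).symm w) = v ⬝ᵥ w := by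
    rw [PiLp.inner_apply]; simp [dotProduct, mul_comm]
  rw [← h, ← norm_symm_eq, ← norm_symm_eq]
  exact real_inner_le_norm _ _

lemma spec_nonneg [DecidableEq k] (M : Matrix m k ℝ) : 0 ≤ spec M := norm_nonneg _

lemma mulVec_sqrt_le [DecidableEq k] (M : Matrix m k ℝ) (v : k → ℝ) :
    Real.sqrt (nsq (M *ᵥ v)) ≤ spec M * Real.sqrt (nsq v) := by
  have h := (LinearMap.toContinuousLinearMap (Matrix.toEuclideanLin M)).le_opNorm
      ((WithLp.equiv 2 (k → ℝ)).symm v)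
  have happ : (LinearMap.toContinuousLinearMap (Matrix.toEuclideanLin M))
      ((WithLp.equiv 2 (k → ℝ)).symm v) = (WithLp.equiv 2 (m → ℝ)).symm (M *ᵥ v) := by
    simp [LinearMap.coe_toContinuousLinearMap']
  rw [happ, norm_symm_eq, norm_symm_eq] at h
  exact h

lemma mulVec_nsq_le [DecidableEq k] (M : Matrix m k ℝ) (v : k → ℝ) :
    nsq (M *ᵥ v) ≤ spec M ^ 2 * nsq v := by
  have h := mulVec_sqrt_le M v
  have h2 : Real.sqrt (nsq (M *ᵥ v)) ^ 2 ≤ (spec M * Real.sqrt (nsq v)) ^ 2 := by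
    apply pow_le_pow_left₀ (Real.sqrt_nonneg _) h
  rwa [Real.sq_sqrt (nsq_nonneg _), mul_pow, Real.sq_sqrt (nsq_nonneg _)] at h2

lemma spec_le_of [DecidableEq k] (M : Matrix m k ℝ) (c : ℝ) (hc : 0 ≤ c)
    (h : ∀ v, nsq (M *ᵥ v) ≤ c ^ 2 * nsq v) : spec M ≤ c := by
  apply ContinuousLinearMap.opNorm_le_bound _ hc
  intro x
  have happ : (LinearMap.toContinuousLinearMap (Matrix.toEuclideanLin M)) x
      = (WithLp.equiv 2 (m → ℝ)).symm (M *ᵥ (WithLp.equiv 2 (k → ℝ)) x) := by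
    simp [LinearMap.coe_toContinuousLinearMap']
    rfl
  rw [happ, norm_symm_eq]
  have hx : ‖x‖ = Real.sqrt (nsq ((WithLp.equiv 2 (k → ℝ)) x)) := by
    rw [← norm_symm_eq]; rfl
  rw [hx]
  have := h ((WithLp.equiv 2 (k → ℝ)) x)
  calc Real.sqrt (nsq (M *ᵥ (WithLp.equiv 2 (k → ℝ)) x))
      ≤ Real.sqrt (c ^ 2 * nsq ((WithLp.equiv 2 (k → ℝ)) x)) := Real.sqrt_le_sqrt this
    _ = c * Real.sqrt (nsq ((WithLp.equiv 2 (k → ℝ)) x)) := by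
        rw [Real.sqrt_mul (sq_nonneg _), Real.sqrt_sq hc]

lemma frob_sq_cols (X : Matrix m k ℝ) : frob X ^ 2 = ∑ q, nsq (fun p => X p q) := by
  rw [frob_sq]; exact Finset.sum_comm

lemma col_mul (M : Matrix l m ℝ) (X : Matrix m k ℝ) (q : k) :
    (fun p => (M * X) p q) = M *ᵥ (fun p => X p q) := by
  funext p
  simp [Matrix.mul_apply, Matrix.mulVec, dotProduct]

lemma frob_mul_le [DecidableEq m] (M : Matrix l m ℝ) (X : Matrix m k ℝ) :
    frob (M * X) ≤ spec M * frob X := by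
  have hsq : frob (M * X) ^ 2 ≤ (spec M * frob X) ^ 2 := by
    rw [frob_sq_cols, mul_pow, frob_sq_cols, Finset.mul_sum]
    apply Finset.sum_le_sum
    intro q _
    rw [col_mul]
    exact mulVec_nsq_le M _
  have h1 := frob_nonneg (M * X)
  have h2 : 0 ≤ spec M * frob X := mul_nonneg (spec_nonneg M) (frob_nonneg X)
  nlinarith

/-- norm preservation under orthogonal transformation -/
lemma nsq_mulVec_orth [DecidableEq m] {G : Matrix m m ℝ} (hG : Gᵀ * G = 1) (v : m → ℝ) :
    nsq (G *ᵥ v) = nsq v := by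
  have h1 : nsq (G *ᵥ v) = (G *ᵥ v) ⬝ᵥ (G *ᵥ v) := by
    simp [nsq, dotProduct, sq]
  have h2 : nsq v = v ⬝ᵥ v := by simp [nsq, dotProduct, sq]
  rw [h1, h2]
  rw [Matrix.dotProduct_mulVec, ← Matrix.mulVec_transpose, Matrix.mulVec_mulVec, hG,
    Matrix.one_mulVec]

lemma conjT_eq_transpose {m k : Type*} (M : Matrix m k ℝ) : Mᴴ = Mᵀ := by
  ext a b
  simp [Matrix.conjTranspose_apply]

lemma dot_self_eq_nsq {m : Type*} [Fintype m] (v : m → ℝ) : v ⬝ᵥ v = nsq v := by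
  simp [dotProduct, nsq, sq]


lemma frob_sq_trace {m k : Type*} [Fintype m] [Fintype k] (X : Matrix m k ℝ) :
    frob X ^ 2 = Matrix.trace (Xᵀ * X) := by
  rw [frob_sq, trace_transpose_mul']
  exact Finset.sum_congr rfl fun i _ => Finset.sum_congr rfl fun j _ => by rw [pow_two]

lemma dot_mulVec_self {m k : Type*} [Fintype m] [Fintype k] (A : Matrix m k ℝ) (v : k → ℝ) :
    (A *ᵥ v) ⬝ᵥ (A *ᵥ v) = v ⬝ᵥ ((Aᵀ * A) *ᵥ v) := by
  rw [Matrix.dotProduct_mulVec, ← Matrix.mulVec_transpose, Matrix.mulVec_mulVec]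
  exact dotProduct_comm _ _

end AuxToolkit

lemma nsq_E1_mulVec (W' : Matrix (Fin n) (Fin n) ℝ)
    (Gs : Matrix (Fin n × Fin d) (Fin d) ℝ) (hGs : OdN Gs) (v : Fin n × Fin d → ℝ) :
    nsq ((had (kron1 W') (Gs * Gsᵀ)) *ᵥ v) ≤ spec W' ^ 2 * nsq v := by
  classical
  set u : Fin n → Fin d → ℝ := fun j c => ∑ b, Gs (j, b) c * v (j, b) with hu
  set w : Fin n → Fin d → ℝ := fun i c => ∑ j, W' i j * u j c with hw
  have step1 : ∀ i a, ((had (kron1 W') (Gs * Gsᵀ)) *ᵥ v) (i, a)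
      = ∑ c, Gs (i, a) c * w i c := by
    intro i a
    have lhs : ((had (kron1 W') (Gs * Gsᵀ)) *ᵥ v) (i, a)
        = ∑ j, ∑ b, ∑ c, W' i j * Gs (i, a) c * Gs (j, b) c * v (j, b) := by
      simp only [Matrix.mulVec, dotProduct, Fintype.sum_prod_type, had, kron1,
        Matrix.kroneckerMap_apply, Matrix.of_apply, Matrix.mul_apply, Matrix.transpose_apply]
      refine Finset.sum_congr rfl fun j _ => Finset.sum_congr rfl fun b _ => ?_
      rw [mul_one, Finset.mul_sum, Finset.sum_mul]
      exact Finset.sum_congr rfl fun c _ => by ring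
    have rhs : ∑ c, Gs (i, a) c * w i c
        = ∑ c, ∑ j, ∑ b, W' i j * Gs (i, a) c * Gs (j, b) c * v (j, b) := by
      refine Finset.sum_congr rfl fun c _ => ?_
      rw [hw]
      simp only [hu, Finset.mul_sum]
      refine Finset.sum_congr rfl fun j _ => ?_
      exact Finset.sum_congr rfl fun b _ => by ring
    rw [lhs, rhs]
    calc ∑ j, ∑ b, ∑ c, W' i j * Gs (i, a) c * Gs (j, b) c * v (j, b)
        = ∑ j, ∑ c, ∑ b, W' i j * Gs (i, a) c * Gs (j, b) c * v (j, b) :=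
          Finset.sum_congr rfl fun j _ => Finset.sum_comm
      _ = ∑ c, ∑ j, ∑ b, W' i j * Gs (i, a) c * Gs (j, b) c * v (j, b) :=
          Finset.sum_comm
  have step2 : nsq ((had (kron1 W') (Gs * Gsᵀ)) *ᵥ v) = ∑ i, nsq (w i) := by
    rw [nsq, Fintype.sum_prod_type]
    refine Finset.sum_congr rfl fun i _ => ?_
    have : ∀ a, ((had (kron1 W') (Gs * Gsᵀ)) *ᵥ v) (i, a) = (blk Gs i *ᵥ w i) a := by
      intro a
      rw [step1 i a]
      simp [Matrix.mulVec, dotProduct, blk]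
    calc ∑ a, ((had (kron1 W') (Gs * Gsᵀ)) *ᵥ v) (i, a) ^ 2
        = ∑ a, (blk Gs i *ᵥ w i) a ^ 2 := by
          exact Finset.sum_congr rfl fun a _ => by rw [this a]
      _ = nsq (w i) := nsq_mulVec_orth (hGs i).1 (w i)
  have step3 : ∑ i, nsq (w i) ≤ spec W' ^ 2 * ∑ j, nsq (u j) := by
    have swap : ∑ i, nsq (w i) = ∑ c, nsq (fun i => w i c) := by
      simp only [nsq]; exact Finset.sum_comm
    have swap2 : ∑ j, nsq (u j) = ∑ c, nsq (fun j => u j c) := by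
      simp only [nsq]; exact Finset.sum_comm
    rw [swap, swap2, Finset.mul_sum]
    apply Finset.sum_le_sum
    intro c _
    have : (fun i => w i c) = W' *ᵥ (fun j => u j c) := by
      funext i
      simp [hw, Matrix.mulVec, dotProduct]
    rw [this]
    exact mulVec_nsq_le W' _
  have step4 : ∑ j, nsq (u j) = nsq v := by
    rw [nsq, Fintype.sum_prod_type]
    refine Finset.sum_congr rfl fun j _ => ?_
    have : u j = (blk Gs j)ᵀ *ᵥ (fun b => v (j, b)) := by
      funext c
      simp [hu, Matrix.mulVec, dotProduct, blk]
    have horth : ((blk Gs j)ᵀ)ᵀ * (blk Gs j)ᵀ = 1 := by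
      rw [Matrix.transpose_transpose]; exact (hGs j).2
    calc nsq (u j) = nsq ((blk Gs j)ᵀ *ᵥ (fun b => v (j, b))) := by rw [this]
      _ = nsq (fun b => v (j, b)) := nsq_mulVec_orth horth _
      _ = ∑ b, v (j, b) ^ 2 := rfl
  calc nsq ((had (kron1 W') (Gs * Gsᵀ)) *ᵥ v) = ∑ i, nsq (w i) := step2
    _ ≤ spec W' ^ 2 * ∑ j, nsq (u j) := step3
    _ = spec W' ^ 2 * nsq v := by rw [step4]

lemma frob_E1_mul_le (W' : Matrix (Fin n) (Fin n) ℝ)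
    (Gs : Matrix (Fin n × Fin d) (Fin d) ℝ) (hGs : OdN Gs)
    (Y : Matrix (Fin n × Fin d) (Fin d) ℝ) :
    frob ((had (kron1 W') (Gs * Gsᵀ)) * Y) ≤ spec W' * frob Y := by
  have hsq : frob ((had (kron1 W') (Gs * Gsᵀ)) * Y) ^ 2 ≤ (spec W' * frob Y) ^ 2 := by
    rw [frob_sq_cols, mul_pow, frob_sq_cols, Finset.mul_sum]
    apply Finset.sum_le_sum
    intro q _
    rw [col_mul]
    exact nsq_E1_mulVec W' Gs hGs _
  nlinarith [frob_nonneg ((had (kron1 W') (Gs * Gsᵀ)) * Y),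
    mul_nonneg (spec_nonneg W') (frob_nonneg Y)]

lemma isOd_of_left {g : Matrix (Fin d) (Fin d) ℝ} (h : gᵀ * g = 1) : IsOd g :=
  ⟨h, mul_eq_one_comm.mp h⟩

lemma IsOd.one : IsOd (1 : Matrix (Fin d) (Fin d) ℝ) := by
  constructor <;> simp

lemma IsOd.mul {g h : Matrix (Fin d) (Fin d) ℝ} (hg : IsOd g) (hh : IsOd h) : IsOd (g * h) := by
  refine isOd_of_left ?_
  rw [Matrix.transpose_mul, Matrix.mul_assoc, ← Matrix.mul_assoc gᵀ, hg.1, Matrix.one_mul, hh.1]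

lemma IsOd.transpose {g : Matrix (Fin d) (Fin d) ℝ} (hg : IsOd g) : IsOd gᵀ := by
  refine isOd_of_left ?_
  rw [Matrix.transpose_transpose, hg.2]

lemma stdBasisMatrix_transpose (i j : Fin d) (c : ℝ) :
    (Matrix.single i j c)ᵀ = Matrix.single j i c := by
  ext a b
  simp only [Matrix.transpose_apply, Matrix.single, Matrix.of_apply]
  by_cases h1 : j = a <;> by_cases h2 : i = b <;> simp [h1, h2, and_comm]

lemma trace_stdBasisMatrix_mul (i j : Fin d) (R : Matrix (Fin d) (Fin d) ℝ) :
    Matrix.trace (Matrix.single i j (1:ℝ) * R) = R j i := by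
  rw [Matrix.trace]
  rw [Finset.sum_eq_single i]
  · simp
  · intro b _ hb
    rw [Matrix.diag_apply, Matrix.single_mul_apply_of_ne (1:ℝ) i j b b hb]
  · simp

/-- the Givens rotation -/
def rotM (i j : Fin d) (x y : ℝ) : Matrix (Fin d) (Fin d) ℝ :=
  1 + (x - 1) • (Matrix.single i i 1 + Matrix.single j j 1)
    + y • (Matrix.single i j 1 - Matrix.single j i 1)

lemma rotM_isOd {i j : Fin d} (hij : i ≠ j) {x y : ℝ} (h : x ^ 2 + y ^ 2 = 1) :
    IsOd (rotM i j x y) := by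
  have hms : ∀ a b c : Fin d,
      Matrix.single a b (1:ℝ) * Matrix.single b c 1
        = Matrix.single a c 1 := fun a b c => by
    simpa using Matrix.single_mul_single_same a b (1:ℝ) c (1:ℝ)
  have hmn : ∀ (a b c e : Fin d), b ≠ c →
      Matrix.single a b (1:ℝ) * Matrix.single c e 1 = 0 := fun a b c e hbc =>
    Matrix.single_mul_single_of_ne (1:ℝ) a b c hbc (1:ℝ)
  set A := Matrix.single i i (1:ℝ) + Matrix.single j j (1:ℝ) with hA
  set B := Matrix.single i j (1:ℝ) - Matrix.single j i (1:ℝ) with hB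
  have hAA : A * A = A := by
    rw [hA]
    rw [Matrix.add_mul, Matrix.mul_add, Matrix.mul_add, hms, hms,
      hmn i i j j hij, hmn j j i i hij.symm]
    abel
  have hBB : B * B = -A := by
    rw [hB, hA]
    rw [Matrix.sub_mul, Matrix.mul_sub, Matrix.mul_sub, hms, hms,
      hmn i j i j hij.symm, hmn j i j i hij]
    abel
  have hAB : A * B = B := by
    rw [hA, hB]
    rw [Matrix.add_mul, Matrix.mul_sub, Matrix.mul_sub, hms, hms,
      hmn i i j i hij, hmn j j i j hij.symm]
    abel
  have hBA : B * A = B := by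
    rw [hB, hA]
    rw [Matrix.sub_mul, Matrix.mul_add, Matrix.mul_add, hms, hms,
      hmn i j i i hij.symm, hmn j i j j hij]
    abel
  have htr : (rotM i j x y)ᵀ = 1 + (x - 1) • A - y • B := by
    rw [rotM, ← hA, ← hB]
    rw [Matrix.transpose_add, Matrix.transpose_add, Matrix.transpose_smul, Matrix.transpose_smul,
      Matrix.transpose_one, Matrix.transpose_add, Matrix.transpose_sub,
      stdBasisMatrix_transpose, stdBasisMatrix_transpose, stdBasisMatrix_transpose,
      stdBasisMatrix_transpose]
    rw [hA, hB]
    have h1 : Matrix.single j i (1:ℝ) - Matrix.single i j 1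
        = -(Matrix.single i j (1:ℝ) - Matrix.single j i 1) := by abel
    rw [h1, smul_neg]
    abel
  apply isOd_of_left
  have expand : (rotM i j x y)ᵀ * rotM i j x y = 1 + (x ^ 2 + y ^ 2 - 1) • A := by
    rw [htr, rotM, ← hA, ← hB]
    simp only [Matrix.add_mul, Matrix.mul_add, Matrix.sub_mul, Matrix.mul_sub,
      smul_mul_assoc, mul_smul_comm, Matrix.one_mul, Matrix.mul_one,
      hAA, hBB, hAB, hBA, smul_smul, smul_neg]
    module
  rw [expand, h]
  simp

lemma trace_rotM_mul (i j : Fin d) (x y : ℝ) (R : Matrix (Fin d) (Fin d) ℝ) :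
    Matrix.trace (rotM i j x y * R)
      = Matrix.trace R + (x - 1) * (R i i + R j j) + y * (R j i - R i j) := by
  rw [rotM]
  simp only [Matrix.add_mul, Matrix.smul_mul, Matrix.one_mul, Matrix.trace_add,
    Matrix.trace_smul, Matrix.sub_mul, Matrix.trace_sub,
    trace_stdBasisMatrix_mul]
  simp [smul_eq_mul]

/-- reflection matrix -/
def reflM (v : Fin d → ℝ) : Matrix (Fin d) (Fin d) ℝ :=
  1 - (2 / (v ⬝ᵥ v)) • Matrix.vecMulVec v v

lemma vecMulVec_mul_self (v : Fin d → ℝ) :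
    Matrix.vecMulVec v v * Matrix.vecMulVec v v = (v ⬝ᵥ v) • Matrix.vecMulVec v v := by
  ext a b
  simp only [Matrix.mul_apply, Matrix.vecMulVec_apply, Matrix.smul_apply, smul_eq_mul,
    dotProduct]
  rw [Finset.sum_mul]
  exact Finset.sum_congr rfl fun c _ => by ring

lemma vecMulVec_transpose (v : Fin d → ℝ) :
    (Matrix.vecMulVec v v)ᵀ = Matrix.vecMulVec v v := by
  ext a b
  simp [Matrix.vecMulVec_apply, mul_comm]

lemma reflM_isOd {v : Fin d → ℝ} (hv : v ⬝ᵥ v ≠ 0) : IsOd (reflM v) := by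
  apply isOd_of_left
  have htr : (reflM v)ᵀ = reflM v := by
    rw [reflM, Matrix.transpose_sub, Matrix.transpose_one, Matrix.transpose_smul,
      vecMulVec_transpose]
  rw [htr, reflM]
  set c : ℝ := 2 / (v ⬝ᵥ v) with hc
  set V := Matrix.vecMulVec v v with hV
  have key : (1 - c • V) * (1 - c • V) = 1 - c • V - c • V + (c * (c * (v ⬝ᵥ v))) • V := by
    simp only [Matrix.mul_sub, Matrix.sub_mul, Matrix.one_mul, Matrix.mul_one,
      smul_mul_assoc, mul_smul_comm, hV, vecMulVec_mul_self, smul_smul]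
    module
  rw [key]
  have hcc : c * (c * (v ⬝ᵥ v)) = c + c := by
    rw [hc]; field_simp; ring
  rw [hcc, add_smul]
  abel

lemma trace_vecMulVec_mul (v : Fin d → ℝ) (R : Matrix (Fin d) (Fin d) ℝ) :
    Matrix.trace (Matrix.vecMulVec v v * R) = v ⬝ᵥ (R *ᵥ v) := by
  rw [Matrix.trace, dotProduct]
  simp only [Matrix.diag_apply, Matrix.mul_apply, Matrix.vecMulVec_apply, Matrix.mulVec,
    dotProduct]
  rw [Finset.sum_comm]
  refine Finset.sum_congr rfl fun c _ => ?_
  rw [Finset.mul_sum]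
  exact Finset.sum_congr rfl fun a _ => by ring

open scoped MatrixOrder in
lemma exists_psd_sqrt (R : Matrix (Fin d) (Fin d) ℝ) (h : R.PosSemidef) :
    ∃ S : Matrix (Fin d) (Fin d) ℝ, S * S = R ∧ Sᴴ = S :=
  ⟨CFC.sqrt R, CFC.sqrt_mul_sqrt_self R h.nonneg, (CFC.sqrt_nonneg R).posSemidef.1⟩

/-- existence of a maximizer of `g ↦ tr(gᵀ B)` over `O(d)` -/
lemma exists_max_trace (B : Matrix (Fin d) (Fin d) ℝ) :
    ∃ g₀, IsOd g₀ ∧ ∀ g, IsOd g → Matrix.trace (gᵀ * B) ≤ Matrix.trace (g₀ᵀ * B) := by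
  classical
  set K : Set (Matrix (Fin d) (Fin d) ℝ) := {g | IsOd g} with hK
  have hclosed : IsClosed K := by
    have : K = (fun g : Matrix (Fin d) (Fin d) ℝ => (gᵀ * g, g * gᵀ)) ⁻¹'
        {((1 : Matrix (Fin d) (Fin d) ℝ), (1 : Matrix (Fin d) (Fin d) ℝ))} := by
      ext g
      simp [hK, IsOd, Prod.ext_iff]
    rw [this]
    apply IsClosed.preimage
    · exact (continuous_id.matrix_transpose.matrix_mul continuous_id).prodMk
        (continuous_id.matrix_mul continuous_id.matrix_transpose)
    · exact isClosed_singleton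
  have hsub : K ⊆ Set.univ.pi fun _ : Fin d => Set.univ.pi fun _ : Fin d => Set.Icc (-1:ℝ) 1 := by
    intro g hg
    apply Set.mem_pi.mpr
    intro a _
    rw [Set.mem_pi]
    intro b _
    have h1 : ((gᵀ * g) b b) = 1 := by rw [hg.1]; simp
    have h2 : ∑ c, g c b ^ 2 = 1 := by
      rw [← h1]
      simp [Matrix.mul_apply, sq]
    have h3 : g a b ^ 2 ≤ 1 := by
      rw [← h2]
      exact Finset.single_le_sum (fun c _ => sq_nonneg (g c b)) (Finset.mem_univ a)
    constructor
    · nlinarith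
    · nlinarith
  have hcompact : IsCompact K := by
    apply IsCompact.of_isClosed_subset ?_ hclosed hsub
    exact isCompact_univ_pi fun _ => isCompact_univ_pi fun _ => isCompact_Icc
  have hcont : Continuous fun g : Matrix (Fin d) (Fin d) ℝ => Matrix.trace (gᵀ * B) :=
    (continuous_id.matrix_transpose.matrix_mul continuous_const).matrix_trace
  obtain ⟨g₀, hg₀K, hmax⟩ := hcompact.exists_isMaxOn ⟨1, IsOd.one⟩ hcont.continuousOn
  exact ⟨g₀, hg₀K, fun g hg => hmax hg⟩

/-- A maximizer of `g ↦ tr(gᵀ B)` over `O(d)` aligns with `B`: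
its "rotation residue" `g₀ᵀ B` is symmetric PSD, and if `‖B‖ ≤ 1` then
`tr(Bᵀ B) ≤ tr(g₀ᵀ B)`. -/
lemma max_sym_psd (B : Matrix (Fin d) (Fin d) ℝ) (hB : spec B ≤ 1) :
    ∃ g, IsOd g ∧ Matrix.trace (Bᵀ * B) ≤ Matrix.trace (gᵀ * B) := by
  classical
  obtain ⟨g₀, hg₀, hmax⟩ := exists_max_trace B
  set R := g₀ᵀ * B with hR
  have key : ∀ q, IsOd q → Matrix.trace (q * R) ≤ Matrix.trace R := by
    intro q hq
    have h1 : IsOd (g₀ * qᵀ) := hg₀.mul hq.transpose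
    have h2 := hmax _ h1
    rw [Matrix.transpose_mul, Matrix.transpose_transpose] at h2
    rw [hR, ← Matrix.mul_assoc]
    exact h2
  -- symmetry of R
  have hsym : Rᵀ = R := by
    ext a b
    rcases eq_or_ne a b with rfl | hab
    · rfl
    · show R b a = R a b
      set c : ℝ := R a a + R b b with hc
      set s : ℝ := R b a - R a b with hs
      have hzero : s = 0 := by
        by_contra hsne
        have hspos : 0 < s ^ 2 := by positivity
        have hq : 0 < c ^ 2 + s ^ 2 := by positivity
        set r : ℝ := Real.sqrt (c ^ 2 + s ^ 2) with hr
        have hrpos : 0 < r := Real.sqrt_pos.mpr hq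
        have hr2 : r ^ 2 = c ^ 2 + s ^ 2 := Real.sq_sqrt hq.le
        have hrne : r ≠ 0 := ne_of_gt hrpos
        have hxy : (c / r) ^ 2 + (s / r) ^ 2 = 1 := by
          field_simp
          linarith [hr2]
        have hle := key _ (rotM_isOd hab hxy)
        rw [trace_rotM_mul a b (c / r) (s / r) R] at hle
        have h3 : (c / r - 1) * c + (s / r) * s ≤ 0 := by
          rw [← hc, ← hs] at hle
          linarith
        have h4 : (c / r - 1) * c + (s / r) * s = (c ^ 2 + s ^ 2) / r - c := by
          field_simp
          ring
        rw [h4] at h3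
        have h5 : (c ^ 2 + s ^ 2) / r ≤ c := by linarith
        have h6 : c ^ 2 + s ^ 2 ≤ c * r := by
          rw [div_le_iff₀ hrpos] at h5
          linarith
        nlinarith [hr2, hrpos, hspos]
      show R b a = R a b
      have := sub_eq_zero.mp hzero
      linarith [this]
  have hherm : R.IsHermitian := by
    rw [Matrix.IsHermitian, conjT_eq_transpose, hsym]
  -- positive semidefiniteness
  have hpsd : ∀ x : Fin d → ℝ, 0 ≤ x ⬝ᵥ (R *ᵥ x) := by
    intro x
    rcases eq_or_ne (x ⬝ᵥ x) 0 with h0 | h0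
    · have hx0 : x = 0 := by
        funext i
        have hsum : ∑ i, x i * x i = 0 := h0
        have : ∀ j ∈ Finset.univ, (0:ℝ) ≤ x j * x j := fun j _ => mul_self_nonneg _
        have h9 := (Finset.sum_eq_zero_iff_of_nonneg this).mp hsum i (Finset.mem_univ i)
        show x i = 0
        exact mul_self_eq_zero.mp h9
      rw [hx0]
      simp
    · have hle := key _ (reflM_isOd h0)
      have hxx : 0 < x ⬝ᵥ x := by
        rcases lt_or_eq_of_le (by rw [dot_self_eq_nsq]; exact nsq_nonneg x : 0 ≤ x ⬝ᵥ x) with h | h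
        · exact h
        · exact absurd h.symm h0
      have htrace : Matrix.trace (reflM x * R)
          = Matrix.trace R - (2 / (x ⬝ᵥ x)) * (x ⬝ᵥ (R *ᵥ x)) := by
        rw [reflM, Matrix.sub_mul, Matrix.one_mul, Matrix.trace_sub, Matrix.smul_mul,
          Matrix.trace_smul, trace_vecMulVec_mul, smul_eq_mul]
      rw [htrace] at hle
      have h7 : 0 ≤ (2 / (x ⬝ᵥ x)) * (x ⬝ᵥ (R *ᵥ x)) := by linarith
      have h8 : 0 < 2 / (x ⬝ᵥ x) := by positivity
      exact nonneg_of_mul_nonneg_right h7 h8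
  have hRpsd : R.PosSemidef := by
    refine Matrix.PosSemidef.of_dotProduct_mulVec_nonneg hherm fun x => ?_
    have : star x = x := by funext i; simp
    rw [this]
    exact hpsd x
  -- spec R ≤ 1 in the nsq sense
  have hspecR : ∀ v, nsq (R *ᵥ v) ≤ nsq v := by
    intro v
    have h1 : R *ᵥ v = g₀ᵀ *ᵥ (B *ᵥ v) := by
      rw [hR, ← Matrix.mulVec_mulVec]
    have h2 : ((g₀ᵀ)ᵀ) * (g₀ᵀ) = 1 := by rw [Matrix.transpose_transpose, hg₀.2]
    rw [h1, nsq_mulVec_orth h2]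
    calc nsq (B *ᵥ v) ≤ spec B ^ 2 * nsq v := mulVec_nsq_le B v
      _ ≤ 1 * nsq v := by
          apply mul_le_mul_of_nonneg_right _ (nsq_nonneg v)
          nlinarith [spec_nonneg B, hB]
      _ = nsq v := one_mul _
  -- 1 - R is PSD
  have honem : (1 - R).PosSemidef := by
    apply Matrix.PosSemidef.of_dotProduct_mulVec_nonneg
    · rw [Matrix.IsHermitian, conjT_eq_transpose, Matrix.transpose_sub, Matrix.transpose_one, hsym]
    · intro x
      have hstar : star x = x := by funext i; simp
      rw [hstar, Matrix.sub_mulVec, dotProduct_sub, Matrix.one_mulVec]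
      have h1 : x ⬝ᵥ (R *ᵥ x) ≤ Real.sqrt (nsq x) * Real.sqrt (nsq (R *ᵥ x)) := dot_CS _ _
      have h2 : Real.sqrt (nsq (R *ᵥ x)) ≤ Real.sqrt (nsq x) := Real.sqrt_le_sqrt (hspecR x)
      have h3 : x ⬝ᵥ (R *ᵥ x) ≤ Real.sqrt (nsq x) * Real.sqrt (nsq x) := by
        calc x ⬝ᵥ (R *ᵥ x) ≤ Real.sqrt (nsq x) * Real.sqrt (nsq (R *ᵥ x)) := h1
          _ ≤ Real.sqrt (nsq x) * Real.sqrt (nsq x) :=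
            mul_le_mul_of_nonneg_left h2 (Real.sqrt_nonneg _)
      rw [Real.mul_self_sqrt (nsq_nonneg x)] at h3
      rw [dot_self_eq_nsq]
      linarith
  -- trace(R²) ≤ trace(R)
  obtain ⟨S, hSS, hSherm⟩ := exists_psd_sqrt R hRpsd
  have hpsd2 : (S * (1 - R) * Sᴴ).PosSemidef := honem.mul_mul_conjTranspose_same S
  rw [hSherm] at hpsd2
  have hid : S * (1 - R) * S = S * S - (S * S) * (S * S) := by
    rw [← hSS]
    noncomm_ring
  rw [hSS] at hid
  have htrn : 0 ≤ Matrix.trace (R - R * R) := by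
    rw [← hid]
    rw [Matrix.trace]
    apply Finset.sum_nonneg
    intro i _
    have := hpsd2.dotProduct_mulVec_nonneg (Pi.single i (1:ℝ))
    have hms : (S * (1 - R) * S) *ᵥ Pi.single i (1:ℝ) = fun a => (S * (1 - R) * S) a i := by
      funext a
      rw [Matrix.mulVec_single]
      simp
    have hstar : star (Pi.single i (1:ℝ) : Fin d → ℝ) = (Pi.single i (1:ℝ) : Fin d → ℝ) := by funext j; simp
    rw [hstar, hms] at this
    have h10 : (0:ℝ) ≤ Pi.single i (1:ℝ) ⬝ᵥ fun a => (S * (1 - R) * S) a i := this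
    rwa [single_dotProduct, one_mul] at h10
  have htr2 : Matrix.trace (R * R) ≤ Matrix.trace R := by
    rw [Matrix.trace_sub] at htrn
    linarith
  -- conclude
  refine ⟨g₀, hg₀, ?_⟩
  have hBg : g₀ * R = B := by rw [hR, ← Matrix.mul_assoc, hg₀.2, Matrix.one_mul]
  have hBB : Bᵀ * B = R * R := by
    rw [← hBg, Matrix.transpose_mul, Matrix.mul_assoc Rᵀ g₀ᵀ (g₀ * R),
      ← Matrix.mul_assoc g₀ᵀ g₀ R, hg₀.1, Matrix.one_mul, hsym]
  rw [hBB, ← hR]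
  exact htr2

/-- scaled polar alignment -/
lemma polar_scaled (M : Matrix (Fin d) (Fin d) ℝ) (ν : ℝ) (hν : 0 < ν)
    (h : ∀ v, nsq (M *ᵥ v) ≤ ν ^ 2 * nsq v) :
    ∃ g, IsOd g ∧ Matrix.trace (Mᵀ * M) ≤ ν * Matrix.trace (gᵀ * M) := by
  have hνne : ν ≠ 0 := ne_of_gt hν
  set B := ν⁻¹ • M with hBdef
  have hnsq_smul : ∀ (a : ℝ) (w : Fin d → ℝ), nsq (a • w) = a ^ 2 * nsq w := by
    intro a w
    simp [nsq, Finset.mul_sum, mul_pow]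
  have hB : spec B ≤ 1 := by
    apply spec_le_of _ 1 zero_le_one
    intro v
    rw [hBdef, Matrix.smul_mulVec, hnsq_smul]
    calc ν⁻¹ ^ 2 * nsq (M *ᵥ v) ≤ ν⁻¹ ^ 2 * (ν ^ 2 * nsq v) := by
          apply mul_le_mul_of_nonneg_left (h v) (by positivity)
      _ = 1 ^ 2 * nsq v := by field_simp
  obtain ⟨g, hg, hle⟩ := max_sym_psd B hB
  refine ⟨g, hg, ?_⟩
  have h1 : Matrix.trace (Bᵀ * B) = ν⁻¹ * (ν⁻¹ * Matrix.trace (Mᵀ * M)) := by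
    rw [hBdef, Matrix.transpose_smul, Matrix.smul_mul, Matrix.mul_smul, Matrix.trace_smul,
      Matrix.trace_smul, smul_eq_mul, smul_eq_mul]
  have h2 : Matrix.trace (gᵀ * B) = ν⁻¹ * Matrix.trace (gᵀ * M) := by
    rw [hBdef, Matrix.mul_smul, Matrix.trace_smul, smul_eq_mul]
  rw [h1, h2] at hle
  have h3 := mul_le_mul_of_nonneg_left hle (le_of_lt (mul_pos hν hν))
  calc Matrix.trace (Mᵀ * M) = ν * ν * (ν⁻¹ * (ν⁻¹ * Matrix.trace (Mᵀ * M))) := by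
        field_simp
    _ ≤ ν * ν * (ν⁻¹ * Matrix.trace (gᵀ * M)) := h3
    _ = ν * Matrix.trace (gᵀ * M) := by field_simp

lemma blk_sub (X Y : Matrix (Fin n × Fin d) (Fin d) ℝ) (i : Fin n) :
    blk (X - Y) i = blk X i - blk Y i := by
  ext a b; simp [blk]

lemma blk_mul (X : Matrix (Fin n × Fin d) (Fin d) ℝ) (g : Matrix (Fin d) (Fin d) ℝ) (i : Fin n) :
    blk (X * g) i = blk X i * g := by
  ext a b; simp [blk, Matrix.mul_apply]

lemma frob_sq_blk (X : Matrix (Fin n × Fin d) (Fin d) ℝ) :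
    frob X ^ 2 = ∑ i, frob (blk X i) ^ 2 := by
  rw [frob_sq, Fintype.sum_prod_type]
  exact Finset.sum_congr rfl fun i _ => by rw [frob_sq]; rfl

lemma gram_OdN {Gs : Matrix (Fin n × Fin d) (Fin d) ℝ} (hGs : OdN Gs) :
    Gsᵀ * Gs = (n : ℝ) • (1 : Matrix (Fin d) (Fin d) ℝ) := by
  ext b c
  rw [Matrix.mul_apply]
  rw [Fintype.sum_prod_type]
  have : ∀ i : Fin n, ∑ a, Gsᵀ b (i, a) * Gs (i, a) c = (1 : Matrix (Fin d) (Fin d) ℝ) b c := by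
    intro i
    have h := (hGs i).1
    have := congrFun (congrFun h b) c
    rw [← this]
    rw [Matrix.mul_apply]
    exact Finset.sum_congr rfl fun a _ => rfl
  rw [Finset.sum_congr rfl fun i _ => this i]
  simp [Matrix.smul_apply]

lemma nsq_Gst_le {Gs : Matrix (Fin n × Fin d) (Fin d) ℝ} (hGs : OdN Gs) (w : Fin n × Fin d → ℝ) :
    nsq (Gsᵀ *ᵥ w) ≤ (n : ℝ) * nsq w := by
  set y := Gsᵀ *ᵥ w with hy
  have h1 : nsq (Gs *ᵥ y) = (n : ℝ) * nsq y := by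
    rw [← dot_self_eq_nsq, dot_mulVec_self, gram_OdN hGs]
    rw [Matrix.smul_mulVec, Matrix.one_mulVec, dotProduct_smul, smul_eq_mul,
      dot_self_eq_nsq]
  have h2 : nsq y = w ⬝ᵥ (Gs *ᵥ y) := by
    rw [← dot_self_eq_nsq]
    nth_rewrite 1 [hy]
    rw [Matrix.mulVec_transpose, ← Matrix.dotProduct_mulVec]
  have h3 : w ⬝ᵥ (Gs *ᵥ y) ≤ Real.sqrt (nsq w) * Real.sqrt (nsq (Gs *ᵥ y)) := dot_CS _ _
  have h4 : nsq y ≤ Real.sqrt (nsq w) * (Real.sqrt (n : ℝ) * Real.sqrt (nsq y)) := by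
    calc nsq y = w ⬝ᵥ (Gs *ᵥ y) := h2
      _ ≤ Real.sqrt (nsq w) * Real.sqrt (nsq (Gs *ᵥ y)) := h3
      _ = Real.sqrt (nsq w) * (Real.sqrt (n : ℝ) * Real.sqrt (nsq y)) := by
          rw [h1, Real.sqrt_mul (Nat.cast_nonneg n)]
  have h5 : Real.sqrt (nsq y) * Real.sqrt (nsq y) = nsq y := Real.mul_self_sqrt (nsq_nonneg y)
  have h6 : Real.sqrt (nsq y) ≤ Real.sqrt (nsq w) * Real.sqrt (n : ℝ) := by
    rcases eq_or_lt_of_le (Real.sqrt_nonneg (nsq y)) with h | h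
    · rw [← h]; positivity
    · have := h4
      rw [← h5] at this
      nlinarith [this]
  have h7 : nsq y ≤ (Real.sqrt (nsq w) * Real.sqrt (n:ℝ)) ^ 2 := by
    rw [← h5]
    nlinarith [h6, Real.sqrt_nonneg (nsq y), mul_nonneg (Real.sqrt_nonneg (nsq w)) (Real.sqrt_nonneg (n:ℝ))]
  calc nsq y ≤ (Real.sqrt (nsq w) * Real.sqrt (n:ℝ)) ^ 2 := h7
    _ = (n : ℝ) * nsq w := by
        rw [mul_pow, Real.sq_sqrt (nsq_nonneg w), Real.sq_sqrt (Nat.cast_nonneg n)]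
        ring


/-- quality of the spectral estimator.
Under the generative model, let `Φ ∈ ℝ^{nd×d}` satisfy `Φᵀ Φ = n I_d` and maximize
`tr(Φᵀ C Φ)` over all matrices with this constraint, and let `G⁰ ∈ O(d)^{⊗n}` be a
blockwise nearest point of `Φ` in `O(d)^{⊗n}`. Then
`d(G⁰, G*) ≤ 8√d (‖W − μ·1_n1_nᵀ‖ + ‖A ∘ Δ‖)/(√n μ)`. -/
theorem spectral_estimator_quality {n d : ℕ}
    (W : Matrix (Fin n) (Fin n) ℝ) (hW : Wᵀ = W)
    (μ : ℝ) (hμ : 0 < μ) (hWdiag : ∀ i : Fin n, W i i = μ)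
    (Gs : Matrix (Fin n × Fin d) (Fin d) ℝ) (hGs : OdN Gs)
    (Δ : Matrix (Fin n × Fin d) (Fin n × Fin d) ℝ) (hΔ : Δᵀ = Δ)
    (hΔdiag : ∀ i : Fin n, dblk Δ i i = 0)
    (A C : Matrix (Fin n × Fin d) (Fin n × Fin d) ℝ)
    (hA : A = kron1 W) (hC : C = had A (Gs * Gsᵀ + Δ))
    (Φ : Matrix (Fin n × Fin d) (Fin d) ℝ)
    (hΦ : Φᵀ * Φ = (n : ℝ) • (1 : Matrix (Fin d) (Fin d) ℝ))
    (hΦmax : ∀ Ψ : Matrix (Fin n × Fin d) (Fin d) ℝ,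
      Ψᵀ * Ψ = (n : ℝ) • (1 : Matrix (Fin d) (Fin d) ℝ) →
      Matrix.trace (Ψᵀ * C * Ψ) ≤ Matrix.trace (Φᵀ * C * Φ))
    (G0 : Matrix (Fin n × Fin d) (Fin d) ℝ) (hG0 : OdN G0)
    (hG0proj : ∀ i : Fin n, ∀ X : Matrix (Fin d) (Fin d) ℝ, IsOd X →
      frob (blk G0 i - blk Φ i) ≤ frob (X - blk Φ i)) :
    dOrth G0 Gs ≤
      8 * Real.sqrt d * (spec (W - μ • onesMat (Fin n)) + spec (had A Δ)) /
        (Real.sqrt n * μ) := by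
  classical
  have hbdd : BddBelow (Set.range fun g : {g : Matrix (Fin d) (Fin d) ℝ // IsOd g} =>
      frob (G0 - Gs * g.1)) := by
    refine ⟨0, ?_⟩
    rintro x ⟨g', rfl⟩
    exact frob_nonneg _
  set W' := W - μ • onesMat (Fin n) with hW'
  set E2 := had A Δ with hE2
  set ε := spec W' + spec E2 with hε
  have hεnn : 0 ≤ ε := add_nonneg (spec_nonneg _) (spec_nonneg _)
  have hRHSnn : 0 ≤ 8 * Real.sqrt d * ε / (Real.sqrt n * μ) := by
    apply div_nonneg
    · have : 0 ≤ 8 * Real.sqrt d := by positivity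
      exact mul_nonneg this hεnn
    · exact mul_nonneg (Real.sqrt_nonneg _) hμ.le
  rcases Nat.eq_zero_or_pos n with hn0 | hnpos
  · subst hn0
    have hzero : frob (G0 - Gs * (1 : Matrix (Fin d) (Fin d) ℝ)) = 0 := by
      rw [frob]
      have he : (∑ p : Fin 0 × Fin d, ∑ j : Fin d, ((G0 - Gs * (1 : Matrix (Fin d) (Fin d) ℝ)) p j) ^ 2) = 0 := by
        simp
      rw [he, Real.sqrt_zero]
    calc dOrth G0 Gs ≤ frob (G0 - Gs * (1 : Matrix (Fin d) (Fin d) ℝ)) :=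
          ciInf_le hbdd ⟨1, IsOd.one⟩
      _ = 0 := hzero
      _ ≤ _ := hRHSnn
  have hnR : (0:ℝ) < n := by exact_mod_cast hnpos
  set E1 := had (kron1 W') (Gs * Gsᵀ) with hE1
  set E := E1 + E2 with hE
  -- C = μ • Gs Gsᵀ + E
  have hCE : C = μ • (Gs * Gsᵀ) + E := by
    rw [hC, hE, hE1, hE2, hA, hW']
    ext p q
    rcases p with ⟨i, a⟩
    rcases q with ⟨j, b⟩
    simp only [had, kron1, onesMat, Matrix.add_apply, Matrix.smul_apply, Matrix.sub_apply,
      smul_eq_mul, Matrix.kroneckerMap_apply, Matrix.of_apply]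
    ring
  -- W symmetric entrywise
  have hWsym : ∀ i j, W j i = W i j := by
    intro i j
    have h := congrFun (congrFun hW i) j
    simpa [Matrix.transpose_apply] using h
  -- GsGsᵀ symmetric entrywise
  have hGGsym : ∀ p q : Fin n × Fin d, (Gs * Gsᵀ) q p = (Gs * Gsᵀ) p q := by
    intro p q
    simp only [Matrix.mul_apply, Matrix.transpose_apply]
    exact Finset.sum_congr rfl fun c _ => by ring
  have hEsym : Eᵀ = E := by
    rw [hE, Matrix.transpose_add]
    congr 1
    · rw [hE1]
      ext p q
      rcases p with ⟨i, a⟩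
      rcases q with ⟨j, b⟩
      show (had (kron1 W') (Gs * Gsᵀ)) (j, b) (i, a) = (had (kron1 W') (Gs * Gsᵀ)) (i, a) (j, b)
      simp only [had, kron1, Matrix.of_apply, Matrix.kroneckerMap_apply]
      rw [hGGsym (i,a) (j,b)]
      have : W' j i = W' i j := by
        rw [hW']
        simp only [Matrix.sub_apply, Matrix.smul_apply, onesMat, Matrix.of_apply, smul_eq_mul]
        rw [hWsym i j]
      rw [this]
    · rw [hE2]
      ext p q
      rcases p with ⟨i, a⟩
      rcases q with ⟨j, b⟩
      show (had A Δ) (j, b) (i, a) = (had A Δ) (i, a) (j, b)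
      simp only [had, Matrix.of_apply, hA, kron1, Matrix.kroneckerMap_apply]
      rw [hWsym i j]
      have hd : Δ (j, b) (i, a) = Δ (i, a) (j, b) := by
        have h := congrFun (congrFun hΔ (i,a)) (j,b)
        simpa [Matrix.transpose_apply] using h
      rw [hd]
  -- E bounds
  have hEfrob : ∀ Y : Matrix (Fin n × Fin d) (Fin d) ℝ, frob (E * Y) ≤ ε * frob Y := by
    intro Y
    rw [hE, Matrix.add_mul]
    calc frob (E1 * Y + E2 * Y) ≤ frob (E1 * Y) + frob (E2 * Y) := frob_triangle _ _
      _ ≤ spec W' * frob Y + spec E2 * frob Y := by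
          apply add_le_add
          · rw [hE1]; exact frob_E1_mul_le W' Gs hGs Y
          · exact frob_mul_le E2 Y
      _ = ε * frob Y := by rw [hε]; ring
  have hEtr : ∀ X Y : Matrix (Fin n × Fin d) (Fin d) ℝ,
      Matrix.trace (Xᵀ * (E * Y)) ≤ ε * (frob X * frob Y) := by
    intro X Y
    rw [trace_transpose_mul']
    calc (∑ p, ∑ q, X p q * (E * Y) p q) ≤ frob X * frob (E * Y) := ip_le _ _
      _ ≤ frob X * (ε * frob Y) := mul_le_mul_of_nonneg_left (hEfrob Y) (frob_nonneg X)
      _ = ε * (frob X * frob Y) := by ring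
  have hGram := gram_OdN hGs
  set M := Gsᵀ * Φ with hM
  have hΦv : ∀ v, nsq (Φ *ᵥ v) = (n:ℝ) * nsq v := by
    intro v
    rw [← dot_self_eq_nsq, dot_mulVec_self, hΦ, Matrix.smul_mulVec, Matrix.one_mulVec,
      dotProduct_smul, smul_eq_mul, dot_self_eq_nsq]
  have hMv : ∀ v, nsq (M *ᵥ v) ≤ (n:ℝ) ^ 2 * nsq v := by
    intro v
    rw [hM, ← Matrix.mulVec_mulVec]
    calc nsq (Gsᵀ *ᵥ (Φ *ᵥ v)) ≤ (n:ℝ) * nsq (Φ *ᵥ v) := nsq_Gst_le hGs _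
      _ = (n:ℝ) * ((n:ℝ) * nsq v) := by rw [hΦv]
      _ = (n:ℝ) ^ 2 * nsq v := by ring
  obtain ⟨g, hg, hpolar⟩ := polar_scaled M (n:ℝ) hnR hMv
  set Ψ := Gs * g with hΨ
  have hΨorth : Ψᵀ * Ψ = (n:ℝ) • (1 : Matrix (Fin d) (Fin d) ℝ) := by
    rw [hΨ, Matrix.transpose_mul, Matrix.mul_assoc, ← Matrix.mul_assoc Gsᵀ Gs g, hGram,
      Matrix.smul_mul, Matrix.one_mul, Matrix.mul_smul, hg.1]
  have hmax := hΦmax Ψ hΨorth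
  have hMt : Mᵀ = Φᵀ * Gs := by rw [hM, Matrix.transpose_mul, Matrix.transpose_transpose]
  have hPhiGG : Φᵀ * (Gs * Gsᵀ) * Φ = Mᵀ * M := by
    rw [hMt, hM, Matrix.mul_assoc Φᵀ (Gs * Gsᵀ) Φ, Matrix.mul_assoc Gs Gsᵀ Φ,
      ← Matrix.mul_assoc Φᵀ Gs (Gsᵀ * Φ)]
  have hPsiGG : Ψᵀ * (Gs * Gsᵀ) * Ψ = ((n:ℝ) * n) • (1 : Matrix (Fin d) (Fin d) ℝ) := by
    have e1 : Gsᵀ * (Gs * Gsᵀ) * Gs = ((n:ℝ) * n) • (1 : Matrix (Fin d) (Fin d) ℝ) := by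
      calc Gsᵀ * (Gs * Gsᵀ) * Gs = (Gsᵀ * Gs) * (Gsᵀ * Gs) := by
            rw [← Matrix.mul_assoc, Matrix.mul_assoc (Gsᵀ * Gs) Gsᵀ Gs]
        _ = ((n:ℝ) • (1 : Matrix (Fin d) (Fin d) ℝ)) * ((n:ℝ) • (1 : Matrix (Fin d) (Fin d) ℝ)) := by
            rw [hGram]
        _ = ((n:ℝ) * n) • (1 : Matrix (Fin d) (Fin d) ℝ) := by
            rw [Matrix.smul_mul, Matrix.one_mul, smul_smul]
    calc Ψᵀ * (Gs * Gsᵀ) * Ψ = gᵀ * (Gsᵀ * (Gs * Gsᵀ) * Gs * g) := by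
          rw [hΨ, Matrix.transpose_mul]; simp only [Matrix.mul_assoc]
      _ = gᵀ * ((((n:ℝ) * n) • (1 : Matrix (Fin d) (Fin d) ℝ)) * g) := by rw [e1]
      _ = ((n:ℝ) * n) • (gᵀ * g) := by
          rw [Matrix.smul_mul, Matrix.one_mul, Matrix.mul_smul]
      _ = ((n:ℝ) * n) • (1 : Matrix (Fin d) (Fin d) ℝ) := by rw [hg.1]
  have htrone : Matrix.trace ((1 : Matrix (Fin d) (Fin d) ℝ)) = (d : ℝ) := by
    rw [Matrix.trace_one]
    simp
  have hdecΦ : Matrix.trace (Φᵀ * C * Φ)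
      = μ * Matrix.trace (Mᵀ * M) + Matrix.trace (Φᵀ * (E * Φ)) := by
    rw [hCE, Matrix.mul_add, Matrix.add_mul, Matrix.trace_add, Matrix.mul_smul,
      Matrix.smul_mul, Matrix.trace_smul, hPhiGG, smul_eq_mul, Matrix.mul_assoc]
  have hdecΨ : Matrix.trace (Ψᵀ * C * Ψ)
      = μ * ((n:ℝ) * n * d) + Matrix.trace (Ψᵀ * (E * Ψ)) := by
    rw [hCE, Matrix.mul_add, Matrix.add_mul, Matrix.trace_add, Matrix.mul_smul,
      Matrix.smul_mul, Matrix.trace_smul, hPsiGG, Matrix.trace_smul, htrone, smul_eq_mul,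
      smul_eq_mul, Matrix.mul_assoc]
  have hineq1 : μ * ((n:ℝ) * n * d - Matrix.trace (Mᵀ * M))
      ≤ Matrix.trace (Φᵀ * (E * Φ)) - Matrix.trace (Ψᵀ * (E * Ψ)) := by
    rw [hdecΦ, hdecΨ] at hmax
    rw [mul_sub]
    linarith
  have hswap : Matrix.trace (Ψᵀ * (E * Φ)) = Matrix.trace (Φᵀ * (E * Ψ)) := by
    conv_lhs => rw [← Matrix.trace_transpose]
    rw [Matrix.transpose_mul, Matrix.transpose_mul, Matrix.transpose_transpose, hEsym,
      Matrix.mul_assoc]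
  have hsplit : Matrix.trace (Φᵀ * (E * Φ)) - Matrix.trace (Ψᵀ * (E * Ψ))
      = Matrix.trace ((Φ - Ψ)ᵀ * (E * (Φ + Ψ))) := by
    rw [Matrix.transpose_sub, Matrix.mul_add, Matrix.sub_mul, Matrix.mul_add, Matrix.mul_add,
      Matrix.trace_sub, Matrix.trace_add, Matrix.trace_add]
    linarith [hswap]
  have hfrobΦsq : frob Φ ^ 2 = (n:ℝ) * d := by
    rw [frob_sq_trace, hΦ, Matrix.trace_smul, htrone, smul_eq_mul]
  have hfrobΨsq : frob Ψ ^ 2 = (n:ℝ) * d := by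
    rw [frob_sq_trace, hΨorth, Matrix.trace_smul, htrone, smul_eq_mul]
  have hfrobΦ : frob Φ = Real.sqrt ((n:ℝ) * d) := by
    rw [← hfrobΦsq, Real.sqrt_sq (frob_nonneg Φ)]
  have hfrobΨ : frob Ψ = Real.sqrt ((n:ℝ) * d) := by
    rw [← hfrobΨsq, Real.sqrt_sq (frob_nonneg Ψ)]
  have hfrobsum : frob (Φ + Ψ) ≤ 2 * Real.sqrt ((n:ℝ) * d) := by
    calc frob (Φ + Ψ) ≤ frob Φ + frob Ψ := frob_triangle _ _
      _ = 2 * Real.sqrt ((n:ℝ) * d) := by rw [hfrobΦ, hfrobΨ]; ring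
  set F := frob (Φ - Ψ) with hFdef
  have hFnn : 0 ≤ F := frob_nonneg _
  have hineq2 : Matrix.trace ((Φ - Ψ)ᵀ * (E * (Φ + Ψ)))
      ≤ ε * (F * (2 * Real.sqrt ((n:ℝ) * d))) := by
    calc Matrix.trace ((Φ - Ψ)ᵀ * (E * (Φ + Ψ))) ≤ ε * (frob (Φ - Ψ) * frob (Φ + Ψ)) :=
          hEtr _ _
      _ ≤ ε * (F * (2 * Real.sqrt ((n:ℝ) * d))) := by
          apply mul_le_mul_of_nonneg_left _ hεnn
          exact mul_le_mul_of_nonneg_left hfrobsum hFnn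
  -- σ
  have hMfrobsq : frob M ^ 2 ≤ (n:ℝ) * ((n:ℝ) * d) := by
    have h1 : frob M ^ 2 ≤ (n:ℝ) * frob Φ ^ 2 := by
      rw [frob_sq_cols M, frob_sq_cols Φ, Finset.mul_sum]
      apply Finset.sum_le_sum
      intro q _
      have hcol : (fun p => M p q) = Gsᵀ *ᵥ (fun p => Φ p q) := by
        rw [hM]; exact col_mul Gsᵀ Φ q
      rw [hcol]
      exact nsq_Gst_le hGs _
    rw [hfrobΦsq] at h1
    exact h1
  have hMtr : Matrix.trace (Mᵀ * M) ≤ (n:ℝ) * n * d := by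
    rw [← frob_sq_trace]
    calc frob M ^ 2 ≤ (n:ℝ) * ((n:ℝ) * d) := hMfrobsq
      _ = (n:ℝ) * n * d := by ring
  have hFsq : F ^ 2 = 2 * ((n:ℝ) * d) - 2 * Matrix.trace (gᵀ * M) := by
    rw [hFdef, frob_sq_trace]
    have hexp : (Φ - Ψ)ᵀ * (Φ - Ψ) = Φᵀ * Φ - Φᵀ * Ψ - Ψᵀ * Φ + Ψᵀ * Ψ := by
      rw [Matrix.transpose_sub, Matrix.sub_mul, Matrix.mul_sub, Matrix.mul_sub]
      abel
    rw [hexp, Matrix.trace_add, Matrix.trace_sub, Matrix.trace_sub]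
    have h1 : Matrix.trace (Φᵀ * Φ) = (n:ℝ) * d := by
      rw [hΦ, Matrix.trace_smul, htrone, smul_eq_mul]
    have h2 : Matrix.trace (Ψᵀ * Ψ) = (n:ℝ) * d := by
      rw [hΨorth, Matrix.trace_smul, htrone, smul_eq_mul]
    have h3 : Matrix.trace (Ψᵀ * Φ) = Matrix.trace (gᵀ * M) := by
      rw [hΨ, Matrix.transpose_mul, Matrix.mul_assoc, hM]
    have h4 : Matrix.trace (Φᵀ * Ψ) = Matrix.trace (Ψᵀ * Φ) := by
      conv_lhs => rw [← Matrix.trace_transpose]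
      rw [Matrix.transpose_mul, Matrix.transpose_transpose]
    rw [h1, h2, h4, h3]
    ring
  have hFineq : (n:ℝ) * F ^ 2 ≤ 2 * ((n:ℝ) * n * d - Matrix.trace (Mᵀ * M)) := by
    rw [hFsq]
    nlinarith [hpolar]
  have hkey0 : μ * ((n:ℝ) * n * d - Matrix.trace (Mᵀ * M))
      ≤ ε * (F * (2 * Real.sqrt ((n:ℝ) * d))) := by
    calc μ * ((n:ℝ) * n * d - Matrix.trace (Mᵀ * M))
        ≤ Matrix.trace (Φᵀ * (E * Φ)) - Matrix.trace (Ψᵀ * (E * Ψ)) := hineq1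
      _ = Matrix.trace ((Φ - Ψ)ᵀ * (E * (Φ + Ψ))) := hsplit
      _ ≤ ε * (F * (2 * Real.sqrt ((n:ℝ) * d))) := hineq2
  have hkey1 : μ * ((n:ℝ) * F ^ 2) ≤ 2 * (ε * (F * (2 * Real.sqrt ((n:ℝ) * d)))) := by
    calc μ * ((n:ℝ) * F ^ 2) ≤ μ * (2 * ((n:ℝ) * n * d - Matrix.trace (Mᵀ * M))) :=
          mul_le_mul_of_nonneg_left hFineq hμ.le
      _ = 2 * (μ * ((n:ℝ) * n * d - Matrix.trace (Mᵀ * M))) := by ring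
      _ ≤ 2 * (ε * (F * (2 * Real.sqrt ((n:ℝ) * d)))) := by linarith [hkey0]
  have hsd : Real.sqrt ((n:ℝ) * d) = Real.sqrt (n:ℝ) * Real.sqrt (d:ℝ) :=
    Real.sqrt_mul (Nat.cast_nonneg n) _
  have hnss : Real.sqrt (n:ℝ) * Real.sqrt (n:ℝ) = (n:ℝ) := Real.mul_self_sqrt hnR.le
  have hsnpos : 0 < Real.sqrt (n:ℝ) := Real.sqrt_pos.mpr hnR
  have hkey2 : μ * Real.sqrt (n:ℝ) * F ≤ 4 * ε * Real.sqrt (d:ℝ) := by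
    rcases eq_or_lt_of_le hFnn with hF0 | hFpos
    · rw [← hF0, mul_zero]
      positivity
    · have hmul : (μ * Real.sqrt (n:ℝ) * F) * (Real.sqrt (n:ℝ) * F)
          ≤ (4 * ε * Real.sqrt (d:ℝ)) * (Real.sqrt (n:ℝ) * F) := by
        calc (μ * Real.sqrt (n:ℝ) * F) * (Real.sqrt (n:ℝ) * F)
            = μ * ((n:ℝ) * F ^ 2) := by linear_combination (μ * F ^ 2) * hnss
          _ ≤ 2 * (ε * (F * (2 * Real.sqrt ((n:ℝ) * d)))) := hkey1
          _ = (4 * ε * Real.sqrt (d:ℝ)) * (Real.sqrt (n:ℝ) * F) := by rw [hsd]; ring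
      exact le_of_mul_le_mul_right hmul (mul_pos hsnpos hFpos)
  -- blockwise projection
  have hproj : frob (G0 - Φ) ≤ frob (Ψ - Φ) := by
    have hsq : frob (G0 - Φ) ^ 2 ≤ frob (Ψ - Φ) ^ 2 := by
      rw [frob_sq_blk, frob_sq_blk]
      apply Finset.sum_le_sum
      intro i _
      have hOd : IsOd (blk Ψ i) := by
        rw [hΨ, blk_mul]
        exact (hGs i).mul hg
      have h := hG0proj i (blk Ψ i) hOd
      rw [blk_sub, blk_sub]
      have := pow_le_pow_left₀ (frob_nonneg _) h 2
      exact this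
    nlinarith [frob_nonneg (G0 - Φ), frob_nonneg (Ψ - Φ), hsq]
  have htri : frob (G0 - Ψ) ≤ 2 * F := by
    have hdecomp : G0 - Ψ = (G0 - Φ) + (Φ - Ψ) := by abel
    calc frob (G0 - Ψ) = frob ((G0 - Φ) + (Φ - Ψ)) := by rw [← hdecomp]
      _ ≤ frob (G0 - Φ) + frob (Φ - Ψ) := frob_triangle _ _
      _ ≤ frob (Ψ - Φ) + F := by exact add_le_add hproj le_rfl
      _ = F + F := by rw [frob_neg Ψ Φ]
      _ = 2 * F := by ring
  have hdone : dOrth G0 Gs ≤ 2 * F := by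
    calc dOrth G0 Gs ≤ frob (G0 - Gs * g) := ciInf_le hbdd ⟨g, hg⟩
      _ = frob (G0 - Ψ) := by rw [hΨ]
      _ ≤ 2 * F := htri
  have hfinal : 2 * F ≤ 8 * Real.sqrt d * ε / (Real.sqrt n * μ) := by
    rw [le_div_iff₀ (mul_pos hsnpos hμ)]
    nlinarith [hkey2]
  linarith [hdone, hfinal]

end GroupSync
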